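/- Let Γ be a finitely presented group and Z a finitely generated subgroup of the center of Γ. Then the quotient group Γ/Z is finitely presented. -/

import Mathlib

/-- A group `G` is finitely presented if there are a finite set `S` and a finite set `R`
of relators in the free group on `S` such that `G` is isomorphic to the quotient of the
free group on `S` by the normal closure of `R`. -/
def IsFinitelyPresented (G : Type*) [Group G] : Prop :=
  ∃ (S : Type) (_ : Finite S) (R : Set (FreeGroup S)),
    R.Finite ∧ Nonempty (PresentedGroup R ≃* G)

/-- A subgroup contained in the centre is normal. -/
theorem normal_of_le_center' {G : Type*} [Group G] {H : Subgroup G}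
    (h : H ≤ Subgroup.center G) : H.Normal := by
  constructor
  intro x hx g
  have hc : g * x = x * g := Subgroup.mem_center_iff.mp (h hx) g
  have : g * x * g⁻¹ = x := by rw [hc, mul_inv_cancel_right]
  rwa [this]

/-- Let `Γ` be a finitely presented group and `Z` a finitely generated subgroup of the
centre of `Γ`.  Then the quotient group `Γ/Z` is finitely presented. -/
theorem stmt_6 {Γ : Type*} [Group Γ] (Z : Subgroup Γ) (hZ : Z ≤ Subgroup.center Γ)
    (hfg : Z.FG) (hΓ : IsFinitelyPresented Γ) :
    haveI : Z.Normal := normal_of_le_center' hZ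
    IsFinitelyPresented (Γ ⧸ Z) := by
  haveI hN : Z.Normal := normal_of_le_center' hZ
  obtain ⟨S, hS, R, hRfin, ⟨e⟩⟩ := hΓ
  obtain ⟨T, hT⟩ := hfg
  -- the surjection from the free group to Γ
  let π : FreeGroup S →* Γ :=
    e.toMonoidHom.comp (QuotientGroup.mk' (Subgroup.normalClosure R))
  have hπsurj : Function.Surjective π :=
    e.surjective.comp (QuotientGroup.mk'_surjective _)
  have hkerπ : π.ker = Subgroup.normalClosure R := by
    ext x
    rw [MonoidHom.mem_ker]
    show e ((QuotientGroup.mk' (Subgroup.normalClosure R)) x) = 1 ↔ _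
    refine (map_eq_one_iff e e.injective).trans ?_
    exact QuotientGroup.eq_one_iff x
  -- lifts of generators of Z
  choose f hf using hπsurj
  have hπs : Function.Surjective π := fun b => ⟨f b, hf b⟩
  set R' : Set (FreeGroup S) := R ∪ (f '' (T : Set Γ)) with hR'
  refine ⟨S, hS, R', hRfin.union ((T.finite_toSet).image f), ⟨?_⟩⟩
  -- the map to Γ/Z
  let φ : FreeGroup S →* Γ ⧸ Z := (QuotientGroup.mk' Z).comp π
  have hφsurj : Function.Surjective φ :=
    (QuotientGroup.mk'_surjective Z).comp hπs
  have hkerφ : φ.ker = Subgroup.normalClosure R' := by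
    have hker : φ.ker = Z.comap π := by
      ext x
      simp [φ, MonoidHom.mem_ker, QuotientGroup.eq_one_iff]
    rw [hker]
    apply le_antisymm
    · -- comap π Z ≤ normalClosure R'
      intro x hx
      have hxZ : π x ∈ Z := hx
      rw [← hT] at hxZ
      have hmap : Subgroup.closure ((T : Set Γ)) ≤
          Subgroup.map π (Subgroup.closure (f '' (T : Set Γ))) := by
        rw [MonoidHom.map_closure]
        apply Subgroup.closure_mono
        intro t ht
        exact ⟨f t, ⟨t, ht, rfl⟩, hf t⟩
      obtain ⟨w, hw, hwx⟩ := hmap hxZ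
      have h1 : x * w⁻¹ ∈ Subgroup.normalClosure R := by
        rw [← hkerπ]
        simp [MonoidHom.mem_ker, hwx]
      have h2 : Subgroup.normalClosure R ≤ Subgroup.normalClosure R' :=
        Subgroup.normalClosure_mono (Set.subset_union_left)
      have h3 : w ∈ Subgroup.normalClosure R' := by
        have : Subgroup.closure (f '' (T : Set Γ)) ≤ Subgroup.normalClosure R' :=
          (Subgroup.closure_le _).mpr
            (Set.Subset.trans Set.subset_union_right Subgroup.subset_normalClosure)
        exact this hw
      have : x = (x * w⁻¹) * w := by group
      rw [this]
      exact mul_mem (h2 h1) h3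
    · -- normalClosure R' ≤ comap π Z
      haveI : (Z.comap π).Normal := hN.comap π
      apply Subgroup.normalClosure_le_normal
      intro r hr
      rcases hr with hr | hr
      · have : r ∈ Subgroup.normalClosure R := Subgroup.subset_normalClosure hr
        rw [← hkerπ] at this
        show π r ∈ Z
        rw [MonoidHom.mem_ker.mp this]
        exact Z.one_mem
      · obtain ⟨t, ht, rfl⟩ := hr
        show π (f t) ∈ Z
        rw [hf t, ← hT]
        exact Subgroup.subset_closure ht
  exact (QuotientGroup.quotientMulEquivOfEq hkerφ.symm).trans
    (QuotientGroup.quotientKerEquivOfSurjective φ hφsurj)
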